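/- Let n be an even positive integer, p a natural number, Δs = 2π/n, and s_j = −π + j·Δs for j ∈ ℤ. Let q = binom(2p, p), let σ(η) = 2^{2p}·η·sin^{2p}(πη/2)/q, let sinc(x) = sin(x)/x for x ≠ 0 with sinc(0) = 1, and let sgn(k) ∈ {−1, 0, 1} be the sign of k. Let f : ℤ → ℂ be n-periodic (f(j + n) = f(j) for all j), and define the discrete Fourier coefficients f̂_k = (1/n)·∑_{j=0}^{n−1} f(j)·e^{−i k s_j} for k ∈ ℤ. Then for every j ∈ ℤ, π·i·∑_{k=−n/2}^{n/2−1} sgn(k)·σ(|k|Δs/π)·sinc(|k|Δs/2)·f̂_k·e^{i k (s_j + Δs/2)} = (1/q)·∑_{l=0}^{p} (−1)^l·binom(2p+1, p−l)·( f(j+1+l) − f(j−l) ). -/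

import Mathlib

open Real Finset

lemma aux_sum_Icc (a : ℤ) (n : ℕ) (g : ℤ → ℂ) :
    ∑ k ∈ Finset.Icc a (a + n - 1), g k = ∑ i ∈ Finset.range n, g (a + i) := by
  have himg : Finset.Icc a (a + n - 1) = Finset.image (fun i : ℕ => a + i) (Finset.range n) := by
    ext k
    simp only [Finset.mem_Icc, Finset.mem_image, Finset.mem_range]
    constructor
    · intro h
      exact ⟨(k - a).toNat, by omega, by omega⟩
    · rintro ⟨i, hi, rfl⟩
      omega
  rw [himg, Finset.sum_image]
  intro x _ y _ h
  have h' : a + (x:ℤ) = a + y := h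
  omega

lemma aux_geom (n : ℕ) (hn : 0 < n) (z : ℂ) (hz : z ^ n = 1) (a : ℤ) :
    ∑ k ∈ Finset.Icc a (a + n - 1), z ^ k = if z = 1 then (n : ℂ) else 0 := by
  have hz0 : z ≠ 0 := by
    intro h; rw [h, zero_pow hn.ne'] at hz; exact zero_ne_one hz
  rw [aux_sum_Icc]
  have h2 : ∀ i : ℕ, z ^ (a + (i:ℤ)) = z ^ a * z ^ i := by
    intro i; rw [zpow_add₀ hz0, zpow_natCast]
  simp only [h2, ← Finset.mul_sum]
  by_cases h1 : z = 1
  · simp [h1]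
  · rw [if_neg h1, geom_sum_eq h1, hz]
    simp

lemma aux_exp_sum (n : ℕ) (hn : 0 < n) (hne : Even n) (m : ℤ) :
    ∑ k ∈ Finset.Icc (-(n:ℤ)/2) ((n:ℤ)/2 - 1),
      Complex.exp (Complex.I * k * ((m : ℂ) * (2 * (π:ℂ) / n))) =
      if (n:ℤ) ∣ m then (n:ℂ) else 0 := by
  have hn0 : (n:ℂ) ≠ 0 := Nat.cast_ne_zero.mpr hn.ne'
  have hπ : (π:ℂ) ≠ 0 := Complex.ofReal_ne_zero.mpr Real.pi_ne_zero
  set z : ℂ := Complex.exp (Complex.I * ((m : ℂ) * (2 * (π:ℂ) / n))) with hzdef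
  have hterm : ∀ k : ℤ, Complex.exp (Complex.I * k * ((m : ℂ) * (2 * (π:ℂ) / n))) = z ^ k := by
    intro k
    rw [hzdef, ← Complex.exp_int_mul]
    congr 1
    push_cast
    ring
  have hzn : z ^ n = 1 := by
    rw [hzdef, ← Complex.exp_nat_mul]
    have : (n:ℂ) * (Complex.I * ((m : ℂ) * (2 * (π:ℂ) / n))) = (m:ℂ) * (2 * π * Complex.I) := by
      field_simp
    rw [this, Complex.exp_int_mul_two_pi_mul_I]
  have hiff : z = 1 ↔ (n:ℤ) ∣ m := by
    rw [hzdef, Complex.exp_eq_one_iff]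
    constructor
    · rintro ⟨c, hc⟩
      refine ⟨c, ?_⟩
      have hcn : (m:ℂ) = c * n := by
        have h2π : (2*(π:ℂ)*Complex.I) ≠ 0 := by
          simp [hπ, Complex.I_ne_zero]
        apply mul_right_cancel₀ h2π
        field_simp at hc
        linear_combination (2*(π:ℂ)*Complex.I) * hc
      have hm : m = c * n := by exact_mod_cast hcn
      rw [hm, mul_comm]
    · rintro ⟨c, rfl⟩
      exact ⟨c, by field_simp; push_cast; ring⟩
  obtain ⟨t, ht⟩ := hne
  have he1 : -(n:ℤ)/2 = -(t:ℤ) := by omega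
  have he2 : (n:ℤ)/2 - 1 = -(t:ℤ) + n - 1 := by omega
  rw [he1, he2]
  simp only [hterm]
  rw [aux_geom n hn z hzn (-(t:ℤ))]
  simp only [hiff]

lemma aux_per (n : ℕ) (f : ℤ → ℂ) (hper : ∀ j : ℤ, f (j + n) = f j) :
    ∀ (c : ℤ) (j : ℤ), f (j + c * n) = f j := by
  have hsub : ∀ j : ℤ, f (j - n) = f j := by
    intro j
    have := hper (j - n)
    simpa using this.symm
  intro c
  induction c using Int.induction_on with
  | zero => simp
  | succ i ih =>
    intro j
    rw [show j + ((i:ℤ) + 1) * n = (j + n) + i * n by ring, ih, hper]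
  | pred i ih =>
    intro j
    rw [show j + (-(i:ℤ) - 1) * n = (j - n) + (-(i:ℤ)) * n by ring, ih, hsub]

lemma aux_inv (n : ℕ) (hn : 0 < n) (hne : Even n) (f : ℤ → ℂ)
    (hper : ∀ j : ℤ, f (j + n) = f j) (r : ℤ) :
    ∑ k ∈ Finset.Icc (-(n:ℤ)/2) ((n:ℤ)/2 - 1),
      ((1 / (n : ℂ)) * ∑ j ∈ Finset.range n,
          f j * Complex.exp (-Complex.I * k * ((-π + ((j : ℤ) : ℝ) * (2*π/n) : ℝ) : ℂ)))
        * Complex.exp (Complex.I * k * ((-π + r * (2*π/n) : ℝ) : ℂ)) = f r := by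
  have hn0 : (n:ℂ) ≠ 0 := Nat.cast_ne_zero.mpr hn.ne'
  have hstep : ∀ k : ℤ, ∀ j ∈ Finset.range n,
      f j * Complex.exp (-Complex.I * k * ((-π + ((j : ℤ) : ℝ) * (2*π/n) : ℝ) : ℂ))
        * Complex.exp (Complex.I * k * ((-π + r * (2*π/n) : ℝ) : ℂ))
      = f j * Complex.exp (Complex.I * k * (((r - j : ℤ) : ℂ) * (2 * (π:ℂ) / n))) := by
    intro k j _
    rw [mul_assoc, ← Complex.exp_add]
    congr 2
    push_cast
    ring
  calc ∑ k ∈ Finset.Icc (-(n:ℤ)/2) ((n:ℤ)/2 - 1),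
      ((1 / (n : ℂ)) * ∑ j ∈ Finset.range n,
          f j * Complex.exp (-Complex.I * k * ((-π + ((j : ℤ) : ℝ) * (2*π/n) : ℝ) : ℂ)))
        * Complex.exp (Complex.I * k * ((-π + r * (2*π/n) : ℝ) : ℂ))
      = ∑ j ∈ Finset.range n, ∑ k ∈ Finset.Icc (-(n:ℤ)/2) ((n:ℤ)/2 - 1),
          (1 / (n:ℂ)) * (f j * Complex.exp (Complex.I * k * (((r - j : ℤ) : ℂ) * (2 * (π:ℂ) / n)))) := by
        rw [Finset.sum_comm]
        apply Finset.sum_congr rfl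
        intro k _
        rw [Finset.mul_sum, Finset.sum_mul]
        apply Finset.sum_congr rfl
        intro j hj
        rw [mul_assoc, hstep k j hj]
  _ = ∑ j ∈ Finset.range n, (1 / (n:ℂ)) * (f j * (if (n:ℤ) ∣ (r - j) then (n:ℂ) else 0)) := by
        apply Finset.sum_congr rfl
        intro j _
        rw [← Finset.mul_sum, ← Finset.mul_sum, aux_exp_sum n hn hne (r - j)]
  _ = f r := by
        have hmod := Int.mul_ediv_add_emod r (n:ℤ)
        have hj0 : ((r % n).toNat : ℤ) = r % n := by
          have := Int.emod_nonneg r (by exact_mod_cast hn.ne' : (n:ℤ) ≠ 0)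
          omega
        have hj0lt : (r % n).toNat < n := by
          have := Int.emod_lt_of_pos r (by exact_mod_cast hn : (0:ℤ) < n)
          omega
        have hfr : f r = f (r % n) := by
          conv_lhs => rw [show r = r % n + (r / n) * n by linarith [hmod]]
          exact aux_per n f hper (r / n) (r % n)
        rw [Finset.sum_eq_single ((r % n).toNat)]
        · rw [if_pos]
          · rw [show ((((r % (n:ℤ)).toNat : ℕ)) : ℤ) = r % n from hj0, ← hfr]
            field_simp
          · exact ⟨r / n, by linarith [hmod, hj0]⟩
        · intro b hb hne2
          simp only [Finset.mem_range] at hb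
          rw [if_neg, mul_zero, mul_zero]
          rintro ⟨c, hc⟩
          have hr : r = (b:ℤ) + (n:ℤ) * c := by linarith [hc]
          have hrb : r % (n:ℤ) = b := by
            rw [hr, Int.add_mul_emod_self_left]
            exact Int.emod_eq_of_lt (by positivity) (by exact_mod_cast hb)
          exact hne2 (by omega)
        · intro hmem
          exact absurd (Finset.mem_range.mpr hj0lt) hmem

lemma aux_comb (p : ℕ) (g : ℤ → ℂ) (j : ℤ) :
    ∑ m ∈ Finset.range (2*p+2), (-1:ℂ)^(p+m+1) * (Nat.choose (2*p+1) m : ℂ) * g (j + m - p)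
    = ∑ l ∈ Finset.range (p+1), (-1:ℂ)^l * (Nat.choose (2*p+1) (p-l) : ℂ) * (g (j+1+l) - g (j-l)) := by
  have h : 2*p+2 = (p+1) + (p+1) := by ring
  rw [h, Finset.sum_range_add]
  have h1 : ∑ m ∈ Finset.range (p+1), (-1:ℂ)^(p+m+1) * (Nat.choose (2*p+1) m : ℂ) * g (j + m - p)
      = ∑ l ∈ Finset.range (p+1), -((-1:ℂ)^l * (Nat.choose (2*p+1) (p-l) : ℂ) * g (j-l)) := by
    rw [← Finset.sum_range_reflect]
    apply Finset.sum_congr rfl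
    intro l hl
    simp only [Finset.mem_range] at hl
    have hpl : p + 1 - 1 - l = p - l := by omega
    rw [hpl]
    have hc1 : (j : ℤ) + ((p - l : ℕ) : ℤ) - p = j - l := by
      have : ((p - l : ℕ) : ℤ) = (p : ℤ) - l := by omega
      rw [this]; ring
    rw [hc1]
    have hs : (-1:ℂ)^(p + (p - l) + 1) = -(-1:ℂ)^l := by
      have : p + (p - l) + 1 = 2*(p-l) + l + 1 := by omega
      rw [this, pow_add, pow_add, pow_mul]
      simp
    rw [hs]
    ring
  have h2 : ∀ l ∈ Finset.range (p+1),
      (-1:ℂ)^(p+(p+1+l)+1) * (Nat.choose (2*p+1) (p+1+l) : ℂ) * g (j + ((p+1+l : ℕ) : ℤ) - (p:ℤ))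
      = (-1:ℂ)^l * (Nat.choose (2*p+1) (p-l) : ℂ) * g (j+1+l) := by
    intro l hl
    simp only [Finset.mem_range] at hl
    have hc2 : Nat.choose (2*p+1) (p+1+l) = Nat.choose (2*p+1) (p-l) := by
      rw [show p - l = (2*p+1) - (p+1+l) by omega]
      exact (Nat.choose_symm (by omega)).symm
    have hs : (-1:ℂ)^(p+(p+1+l)+1) = (-1:ℂ)^l := by
      have : p+(p+1+l)+1 = 2*(p+1) + l := by ring
      rw [this, pow_add, pow_mul]
      simp
    have harg : (j : ℤ) + (((p+1+l : ℕ)) : ℤ) - p = j + 1 + l := by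
      push_cast; ring
    rw [hc2, hs, harg]
  rw [h1, Finset.sum_congr rfl h2]
  rw [← Finset.sum_add_distrib]
  apply Finset.sum_congr rfl
  intro l _
  ring

lemma aux_sin (z : ℂ) :
    Complex.exp (z * Complex.I) - Complex.exp (-z * Complex.I) = 2 * Complex.I * Complex.sin z := by
  rw [Complex.sin]
  linear_combination (Complex.exp (z * Complex.I) - Complex.exp (-z * Complex.I)) * Complex.I_sq

lemma aux_stepA (p : ℕ) (Δs : ℝ) (hΔ : 0 < Δs) (q : ℝ) (hq : q ≠ 0) (k : ℤ) (hk : k ≠ 0) :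
    π * (Int.sign k : ℝ) * (2 ^ (2*p) * ((|k|:ℝ) * Δs / π) * Real.sin (π * ((|k|:ℝ) * Δs / π) / 2) ^ (2*p) / q)
      * (Real.sin ((|k|:ℝ) * Δs / 2) / ((|k|:ℝ) * Δs / 2))
    = 2 ^ (2*p+1) * Real.sin ((k:ℝ) * Δs / 2) ^ (2*p+1) / q := by
  have hπ : (π:ℝ) ≠ 0 := Real.pi_ne_zero
  have harg : π * ((|k|:ℝ) * Δs / π) / 2 = (|k|:ℝ) * Δs / 2 := by field_simp
  rw [harg]
  rcases lt_or_gt_of_ne hk with hneg | hpos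
  · have hs : k.sign = -1 := Int.sign_eq_neg_one_of_neg hneg
    have habs : ((|k|:ℝ)) = -(k:ℝ) := by
      rw [← Int.cast_abs, abs_of_neg hneg]; push_cast; ring
    have hk0 : (k:ℝ) ≠ 0 := Int.cast_ne_zero.mpr hk
    rw [hs, habs]
    rw [show -(k:ℝ) * Δs / 2 = -((k:ℝ) * Δs / 2) by ring, Real.sin_neg]
    field_simp
    ring_nf
    simp [pow_mul']
  · have hs : k.sign = 1 := Int.sign_eq_one_of_pos hpos
    have habs : ((|k|:ℝ)) = (k:ℝ) := by
      rw [← Int.cast_abs, abs_of_pos hpos]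
    have hk0 : (k:ℝ) ≠ 0 := Int.cast_ne_zero.mpr hk
    rw [hs, habs]
    field_simp
    ring

lemma aux_coef (Δs : ℝ) (hΔ : 0 < Δs) (p : ℕ) (q : ℝ) (hq : q ≠ 0) (k j : ℤ) :
    (π : ℂ) * Complex.I * ((Int.sign k : ℂ)
        * ((2 ^ (2*p) * ((|k|:ℝ) * Δs / π) * Real.sin (π * ((|k|:ℝ) * Δs / π) / 2) ^ (2*p) / q : ℝ) : ℂ)
        * (((if (|k|:ℝ) * Δs / 2 = 0 then (1:ℝ) else Real.sin ((|k|:ℝ) * Δs / 2) / ((|k|:ℝ) * Δs / 2)) : ℝ) : ℂ)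
        * Complex.exp (Complex.I * k * (((-π + j * Δs) + Δs / 2 : ℝ) : ℂ)))
    = ∑ m ∈ Finset.range (2*p+2), (1/(q:ℂ)) * ((-1:ℂ)^(p+m+1) * (Nat.choose (2*p+1) m : ℂ))
        * Complex.exp (Complex.I * k * ((-π + ((j + m - p : ℤ):ℝ) * Δs : ℝ) : ℂ)) := by
  have hqC : (q:ℂ) ≠ 0 := Complex.ofReal_ne_zero.mpr hq
  by_cases hk : k = 0
  · subst hk
    have hz : (∑ m ∈ Finset.range (2*p+2), (-1:ℂ)^m * (Nat.choose (2*p+1) m : ℂ)) = 0 := by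
      have h := Int.alternating_sum_range_choose (n := 2*p+1)
      rw [if_neg (by omega)] at h
      have h2 := congrArg (Int.cast : ℤ → ℂ) h
      push_cast at h2
      simpa using h2
    simp only [Int.sign_zero, Int.cast_zero, zero_mul, mul_zero, Complex.exp_zero, mul_one]
    rw [eq_comm, ← Finset.mul_sum]
    have h3 : ∑ m ∈ Finset.range (2*p+2), (-1:ℂ)^(p+m+1) * (Nat.choose (2*p+1) m : ℂ)
        = (-1:ℂ)^(p+1) * ∑ m ∈ Finset.range (2*p+2), (-1:ℂ)^m * (Nat.choose (2*p+1) m : ℂ) := by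
      rw [Finset.mul_sum]
      apply Finset.sum_congr rfl
      intro m _
      rw [pow_add, pow_add]
      ring
    rw [h3, hz, mul_zero, mul_zero]
  · -- k ≠ 0
    have hkabs : (0:ℝ) < (|k|:ℝ) := by exact_mod_cast abs_pos.mpr hk
    have hne0 : (|k|:ℝ) * Δs / 2 ≠ 0 := ne_of_gt (by positivity)
    rw [if_neg hne0]
    have hreal := aux_stepA p Δs hΔ q hq k hk
    set θ : ℝ := (k:ℝ) * Δs / 2 with hθ
    set E : ℂ := Complex.exp (Complex.I * k * (((-π + j * Δs) + Δs / 2 : ℝ) : ℂ)) with hE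
    set A : ℂ := Complex.exp ((θ:ℂ) * Complex.I) with hA
    set B : ℂ := Complex.exp (-(θ:ℂ) * Complex.I) with hB
    have hI : Complex.I^(2*p+1) = (-1:ℂ)^p * Complex.I := by
      rw [pow_succ, pow_mul, Complex.I_sq]
    have hn1 : (-1:ℂ)^p * (-1:ℂ)^p = 1 := by
      rw [← pow_add, ← two_mul, pow_mul]
      norm_num
    have hcast : (π:ℂ) * (Int.sign k : ℂ)
        * ((2 ^ (2*p) * ((|k|:ℝ) * Δs / π) * Real.sin (π * ((|k|:ℝ) * Δs / π) / 2) ^ (2*p) / q : ℝ) : ℂ)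
        * ((Real.sin ((|k|:ℝ) * Δs / 2) / ((|k|:ℝ) * Δs / 2) : ℝ) : ℂ)
        = ((2 ^ (2*p+1) * Real.sin θ ^ (2*p+1) / q : ℝ) : ℂ) := by
      rw [← hreal]
      push_cast
      ring
    have hkey : ((2 ^ (2*p+1) * Real.sin θ ^ (2*p+1) / q : ℝ) : ℂ) * (Complex.I * E)
        = (1/(q:ℂ)) * (-1:ℂ)^p * ((A - B)^(2*p+1) * E) := by
      rw [hA, hB, aux_sin ((θ:ℝ):ℂ), mul_pow, mul_pow, hI]
      push_cast [Complex.ofReal_sin]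
      linear_combination (-(2:ℂ)^(2*p+1) * Complex.sin ((θ:ℝ):ℂ)^(2*p+1) * Complex.I * E / (q:ℂ)) * hn1
    have hexp : ∀ m ∈ Finset.range (2*p+2), A^m * B^(2*p+1-m) * E
        = Complex.exp (Complex.I * k * ((-π + ((j + m - p : ℤ):ℝ) * Δs : ℝ) : ℂ)) := by
      intro m hm
      simp only [Finset.mem_range] at hm
      have hm' : m ≤ 2*p+1 := by omega
      rw [hA, hB, ← Complex.exp_nat_mul, ← Complex.exp_nat_mul, ← Complex.exp_add, ← Complex.exp_add]
      congr 1
      have hc : ((2*p+1-m : ℕ):ℂ) = 2*(p:ℂ)+1-(m:ℂ) := by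
        push_cast [Nat.cast_sub hm']
        ring
      rw [hc, hθ]
      push_cast
      ring
    calc (π : ℂ) * Complex.I * ((Int.sign k : ℂ)
        * ((2 ^ (2*p) * ((|k|:ℝ) * Δs / π) * Real.sin (π * ((|k|:ℝ) * Δs / π) / 2) ^ (2*p) / q : ℝ) : ℂ)
        * ((Real.sin ((|k|:ℝ) * Δs / 2) / ((|k|:ℝ) * Δs / 2) : ℝ) : ℂ) * E)
        = ((π:ℂ) * (Int.sign k : ℂ)
            * ((2 ^ (2*p) * ((|k|:ℝ) * Δs / π) * Real.sin (π * ((|k|:ℝ) * Δs / π) / 2) ^ (2*p) / q : ℝ) : ℂ)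
            * ((Real.sin ((|k|:ℝ) * Δs / 2) / ((|k|:ℝ) * Δs / 2) : ℝ) : ℂ)) * (Complex.I * E) := by
          ring
      _ = (1/(q:ℂ)) * (-1:ℂ)^p * ((A - B)^(2*p+1) * E) := by rw [hcast, hkey]
      _ = ∑ m ∈ Finset.range (2*p+2), (1/(q:ℂ)) * ((-1:ℂ)^(p+m+1) * (Nat.choose (2*p+1) m : ℂ))
            * Complex.exp (Complex.I * k * ((-π + ((j + m - p : ℤ):ℝ) * Δs : ℝ) : ℂ)) := by
          rw [sub_pow, Finset.sum_mul, Finset.mul_sum]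
          apply Finset.sum_congr rfl
          intro m hm
          rw [← hexp m hm]
          have hsgn : (1/(q:ℂ)) * (-1:ℂ)^p * ((-1:ℂ)^(m+(2*p+1)) * A^m * B^(2*p+1-m) * (Nat.choose (2*p+1) m : ℂ) * E)
              = (1/(q:ℂ)) * ((-1:ℂ)^(p+m+1) * (Nat.choose (2*p+1) m : ℂ)) * (A^m * B^(2*p+1-m) * E) := by
            have : (-1:ℂ)^(m+(2*p+1)) = (-1:ℂ)^m * ((-1:ℂ)^p * (-1:ℂ)^p * (-1:ℂ)) := by
              rw [pow_add, pow_succ, two_mul, pow_add]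
            rw [this, hn1, pow_add, pow_add]
            ring
          rw [hsgn]

/-- Exact equivalence of the Fourier concentration-factor edge detector (with the
trigonometric concentration factor `σ_{2p+1}`) evaluated at cell midpoints and the
`(2p+1)`-order local differencing edge detector: `S_{n,1/2}^{σ_{2p+1}} f = T_n^p f`. -/
theorem stmt_9 (n : ℕ) (hn : 0 < n) (hne : Even n) (p : ℕ)
    (f : ℤ → ℂ) (hper : ∀ j : ℤ, f (j + n) = f j) :
    let Δs : ℝ := 2 * π / n
    let s : ℤ → ℝ := fun j => -π + j * Δs
    let q : ℝ := Nat.choose (2 * p) p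
    let σ : ℝ → ℝ := fun η => 2 ^ (2 * p) * η * Real.sin (π * η / 2) ^ (2 * p) / q
    let sinc : ℝ → ℝ := fun x => if x = 0 then 1 else Real.sin x / x
    let fhat : ℤ → ℂ := fun k =>
      (1 / (n : ℂ)) * ∑ j ∈ Finset.range n, f j * Complex.exp (-Complex.I * k * (s j : ℂ))
    ∀ j : ℤ,
      (π : ℂ) * Complex.I *
          ∑ k ∈ Finset.Icc (-(n : ℤ) / 2) ((n : ℤ) / 2 - 1),
            (Int.sign k : ℂ) * ((σ ((|k| : ℝ) * Δs / π) : ℝ) : ℂ) *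
              ((sinc ((|k| : ℝ) * Δs / 2) : ℝ) : ℂ) * fhat k *
              Complex.exp (Complex.I * k * ((s j + Δs / 2 : ℝ) : ℂ)) =
        (1 / (q : ℂ)) * ∑ l ∈ Finset.range (p + 1),
            (-1 : ℂ) ^ l * (Nat.choose (2 * p + 1) (p - l) : ℂ) *
              (f (j + 1 + l) - f (j - l)) := by
  intro Δs s q σ sinc fhat j
  have hn0R : (0:ℝ) < n := by exact_mod_cast hn
  have hΔpos : (0:ℝ) < 2 * π / n := div_pos (by positivity) hn0R
  have hq : q ≠ 0 := by
    have : 0 < Nat.choose (2 * p) p := Nat.choose_pos (by omega)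
    simp only [q]
    exact_mod_cast this.ne'
  simp only [Δs, s, σ, sinc, fhat]
  have step1 : ∀ k ∈ Finset.Icc (-(n : ℤ) / 2) ((n : ℤ) / 2 - 1),
      (π : ℂ) * Complex.I * ((Int.sign k : ℂ)
        * ((2 ^ (2*p) * ((|k|:ℝ) * (2*π/n) / π) * Real.sin (π * ((|k|:ℝ) * (2*π/n) / π) / 2) ^ (2*p) / q : ℝ) : ℂ)
        * (((if (|k|:ℝ) * (2*π/n) / 2 = 0 then (1:ℝ) else Real.sin ((|k|:ℝ) * (2*π/n) / 2) / ((|k|:ℝ) * (2*π/n) / 2)) : ℝ) : ℂ)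
        * ((1 / (n : ℂ)) * ∑ j' ∈ Finset.range n, f j' * Complex.exp (-Complex.I * k * ((-π + ((j' : ℤ) : ℝ) * (2*π/n) : ℝ) : ℂ)))
        * Complex.exp (Complex.I * k * (((-π + j * (2*π/n)) + (2*π/n) / 2 : ℝ) : ℂ)))
      = ∑ m ∈ Finset.range (2*p+2), (1/(q:ℂ)) * ((-1:ℂ)^(p+m+1) * (Nat.choose (2*p+1) m : ℂ))
          * (((1 / (n : ℂ)) * ∑ j' ∈ Finset.range n, f j' * Complex.exp (-Complex.I * k * ((-π + ((j' : ℤ) : ℝ) * (2*π/n) : ℝ) : ℂ)))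
              * Complex.exp (Complex.I * k * ((-π + ((j + m - p : ℤ):ℝ) * (2*π/n) : ℝ) : ℂ))) := by
    intro k _
    have h := aux_coef (2*π/n) hΔpos p q hq k j
    have hswap : (π : ℂ) * Complex.I * ((Int.sign k : ℂ)
          * ((2 ^ (2*p) * ((|k|:ℝ) * (2*π/n) / π) * Real.sin (π * ((|k|:ℝ) * (2*π/n) / π) / 2) ^ (2*p) / q : ℝ) : ℂ)
          * (((if (|k|:ℝ) * (2*π/n) / 2 = 0 then (1:ℝ) else Real.sin ((|k|:ℝ) * (2*π/n) / 2) / ((|k|:ℝ) * (2*π/n) / 2)) : ℝ) : ℂ)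
          * ((1 / (n : ℂ)) * ∑ j' ∈ Finset.range n, f j' * Complex.exp (-Complex.I * k * ((-π + ((j' : ℤ) : ℝ) * (2*π/n) : ℝ) : ℂ)))
          * Complex.exp (Complex.I * k * (((-π + j * (2*π/n)) + (2*π/n) / 2 : ℝ) : ℂ)))
        = ((π : ℂ) * Complex.I * ((Int.sign k : ℂ)
            * ((2 ^ (2*p) * ((|k|:ℝ) * (2*π/n) / π) * Real.sin (π * ((|k|:ℝ) * (2*π/n) / π) / 2) ^ (2*p) / q : ℝ) : ℂ)
            * (((if (|k|:ℝ) * (2*π/n) / 2 = 0 then (1:ℝ) else Real.sin ((|k|:ℝ) * (2*π/n) / 2) / ((|k|:ℝ) * (2*π/n) / 2)) : ℝ) : ℂ)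
            * Complex.exp (Complex.I * k * (((-π + j * (2*π/n)) + (2*π/n) / 2 : ℝ) : ℂ))))
          * ((1 / (n : ℂ)) * ∑ j' ∈ Finset.range n, f j' * Complex.exp (-Complex.I * k * ((-π + ((j' : ℤ) : ℝ) * (2*π/n) : ℝ) : ℂ))) := by
      ring
    rw [hswap, h, Finset.sum_mul]
    apply Finset.sum_congr rfl
    intro m _
    ring
  rw [Finset.mul_sum, Finset.sum_congr rfl step1, Finset.sum_comm]
  have step2 : ∀ m ∈ Finset.range (2*p+2),
      ∑ k ∈ Finset.Icc (-(n : ℤ) / 2) ((n : ℤ) / 2 - 1),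
        (1/(q:ℂ)) * ((-1:ℂ)^(p+m+1) * (Nat.choose (2*p+1) m : ℂ))
          * (((1 / (n : ℂ)) * ∑ j' ∈ Finset.range n, f j' * Complex.exp (-Complex.I * k * ((-π + ((j' : ℤ) : ℝ) * (2*π/n) : ℝ) : ℂ)))
              * Complex.exp (Complex.I * k * ((-π + ((j + m - p : ℤ):ℝ) * (2*π/n) : ℝ) : ℂ)))
      = (1/(q:ℂ)) * ((-1:ℂ)^(p+m+1) * (Nat.choose (2*p+1) m : ℂ)) * f (j + m - p) := by
    intro m _
    rw [← Finset.mul_sum]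
    congr 1
    exact aux_inv n hn hne f hper (j + m - p)
  rw [Finset.sum_congr rfl step2]
  rw [← aux_comb p f j, Finset.mul_sum]
  apply Finset.sum_congr rfl
  intro m _
  ring
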